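/- Let α_{ij} = α_{ji} ∈ (0, π/2] for all unordered pairs {i,j} ⊂ {1,2,3,4}, and let M(α) be the 4×4 symmetric matrix with diagonal entries 1 and off-diagonal entries M_{ij} = −cos α_{ij}. Then det M(α) < 0 and every proper principal submatrix of M(α) is positive definite if and only if the following two conditions hold: (2) for each i, writing {j,k,l} = {1,2,3,4}∖{i}, α_{jk} + α_{kl} + α_{jl} > π; and (3) for each face i with {j,k,l} = {1,2,3,4}∖{i}, arccos((cos α_{kl} + cos α_{ik} cos α_{il})/(sin α_{ik} sin α_{il})) + arccos((cos α_{jl} + cos α_{ij} cos α_{il})/(sin α_{ij} sin α_{il})) + arccos((cos α_{jk} + cos α_{ij} cos α_{ik})/(sin α_{ij} sin α_{ik})) < π. -/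

import Mathlib

open Real

/-- The proposed Gram matrix associated to a symmetric array of dihedral angles. -/
noncomputable def gramOf (α : Fin 4 → Fin 4 → ℝ) : Matrix (Fin 4) (Fin 4) ℝ :=
  Matrix.of fun i j => if i = j then 1 else -Real.cos (α i j)

section Auxiliary

lemma det3_val (a b c : ℝ) :
    Matrix.det !![1,-a,-b; -a,1,-c; -b,-c,1] = 1 - a^2 - b^2 - c^2 - 2*(a*(b*c)) := by
  simp [Matrix.det_fin_three]; ring

lemma det4_val (a b c d e f : ℝ) :
    Matrix.det !![1,-a,-b,-c; -a,1,-d,-e; -b,-d,1,-f; -c,-e,-f,1] =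
      (1-a^2)*(1-b^2)*(1-c^2) - (f+b*c)^2*(1-a^2) - (e+a*c)^2*(1-b^2)
        - (d+a*b)^2*(1-c^2) - 2*((f+b*c)*((e+a*c)*(d+a*b))) := by
  simp [Matrix.det_succ_row_zero, Fin.sum_univ_succ]
  simp [Fin.succAbove, Fin.lt_def]
  ring

lemma sign3 {a b c : ℝ} (ha : a ∈ Set.Ioc 0 (π/2)) (hb : b ∈ Set.Ioc 0 (π/2))
    (hc : c ∈ Set.Ioc 0 (π/2)) :
    (0 < 1 - cos a^2 - cos b^2 - cos c^2 - 2*(cos a*(cos b*cos c)) ↔ π < a+b+c) ∧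
    (1 - cos a^2 - cos b^2 - cos c^2 - 2*(cos a*(cos b*cos c)) < 0 ↔ a+b+c < π) := by
  have hpi := pi_pos
  obtain ⟨ha0, ha2⟩ := ha; obtain ⟨hb0, hb2⟩ := hb; obtain ⟨hc0, hc2⟩ := hc
  have hid : 1 - cos a^2 - cos b^2 - cos c^2 - 2*(cos a*(cos b*cos c))
      = -((cos a + cos (b+c)) * (cos a + cos (b-c))) := by
    rw [cos_add, cos_sub]
    linear_combination (cos c^2 - 1) * sin_sq_add_cos_sq b - sin b^2 * sin_sq_add_cos_sq c
  have hg : 0 < cos a + cos (b - c) := by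
    have h1 : 0 ≤ cos a := cos_nonneg_of_mem_Icc ⟨by linarith, ha2⟩
    have h2 : 0 < cos (b - c) := cos_pos_of_mem_Ioo ⟨by linarith, by linarith⟩
    linarith
  have hmem1 : π - a ∈ Set.Icc 0 π := ⟨by linarith, by linarith⟩
  have hmem2 : b + c ∈ Set.Icc 0 π := ⟨by linarith, by linarith⟩
  have key : cos (b+c) < -cos a ↔ π < a + b + c := by
    rw [← cos_pi_sub a]
    constructor
    · intro h
      have := (strictAntiOn_cos.lt_iff_gt hmem2 hmem1).mp h
      linarith
    · intro h
      exact strictAntiOn_cos hmem1 hmem2 (by linarith)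
  have key2 : -cos a < cos (b+c) ↔ a + b + c < π := by
    rw [← cos_pi_sub a]
    constructor
    · intro h
      have := (strictAntiOn_cos.lt_iff_gt hmem1 hmem2).mp h
      linarith
    · intro h
      exact strictAntiOn_cos hmem2 hmem1 (by linarith)
  constructor
  · rw [hid]
    constructor
    · intro h
      have hf : cos a + cos (b+c) < 0 := by nlinarith
      rw [← key]; linarith
    · intro h
      have hf : cos (b+c) < -cos a := key.mpr h
      nlinarith
  · rw [hid]
    constructor
    · intro h
      have hf : 0 < cos a + cos (b+c) := by nlinarith
      rw [← key2]; linarith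
    · intro h
      have hf : -cos a < cos (b+c) := key2.mpr h
      nlinarith

lemma quadpos {p q r : ℝ} (hp : 0 ≤ p) (hp1 : p < 1)
    (hdet : 0 < 1 - p^2 - q^2 - r^2 - 2*(p*(q*r)))
    {x y z : ℝ} (hxyz : ¬ (x = 0 ∧ y = 0 ∧ z = 0)) :
    0 < x^2 + y^2 + z^2 - 2*(p*(x*y)) - 2*(q*(x*z)) - 2*(r*(y*z)) := by
  have h1 : 0 < 1 - p^2 := by nlinarith
  have key : (1-p^2) * (x^2 + y^2 + z^2 - 2*(p*(x*y)) - 2*(q*(x*z)) - 2*(r*(y*z)))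
      = (1-p^2)*(x - p*y - q*z)^2 + ((1-p^2)*y - (r+p*q)*z)^2
        + (1 - p^2 - q^2 - r^2 - 2*(p*(q*r)))*z^2 := by ring
  rcases eq_or_ne z 0 with hz | hz
  · rcases eq_or_ne y 0 with hy | hy
    · have hx : x ≠ 0 := by tauto
      subst hz hy
      have : (0:ℝ) < x^2 := by positivity
      nlinarith
    · subst hz
      have h2 : (0:ℝ) < y^2 := by positivity
      nlinarith [sq_nonneg (x - p*y), mul_pos (mul_pos h1 h1) h2]
  · have h2 : (0:ℝ) < z^2 := by positivity
    nlinarith [sq_nonneg (x - p*y - q*z), sq_nonneg ((1-p^2)*y - (r+p*q)*z),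
      mul_pos hdet h2]

lemma cos_mem {t : ℝ} (ht : t ∈ Set.Ioc 0 (π/2)) : 0 ≤ cos t ∧ cos t < 1 ∧ 0 < sin t := by
  obtain ⟨h0, h2⟩ := ht
  have hpi := pi_pos
  refine ⟨cos_nonneg_of_mem_Icc ⟨by linarith, h2⟩, ?_, sin_pos_of_pos_of_lt_pi h0 (by linarith)⟩
  have := Real.strictAntiOn_cos ⟨le_refl 0, by linarith⟩ ⟨by linarith, by linarith⟩ h0
  simpa using this

lemma quadpos' {A B C : ℝ} (hA : A ∈ Set.Ioc 0 (π/2)) (hB : B ∈ Set.Ioc 0 (π/2))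
    (hC : C ∈ Set.Ioc 0 (π/2)) (hsum : π < A + B + C)
    {x y z : ℝ} (h : ¬ (x = 0 ∧ y = 0 ∧ z = 0)) :
    0 < x^2 + y^2 + z^2 - 2*(cos A*(x*y)) - 2*(cos B*(x*z)) - 2*(cos C*(y*z)) :=
  quadpos (cos_mem hA).1 (cos_mem hA).2.1 ((sign3 hA hB hC).1.mpr hsum) h

lemma qbound {u v w : ℝ} (hu : u ∈ Set.Ioc 0 (π/2)) (hv : v ∈ Set.Ioc 0 (π/2))
    (hw : w ∈ Set.Ioc 0 (π/2)) (hsum : π < u + v + w) :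
    0 ≤ (cos u + cos v * cos w) / (sin v * sin w)
      ∧ (cos u + cos v * cos w) / (sin v * sin w) < 1 := by
  have hpi := pi_pos
  obtain ⟨hcu, _, hsu⟩ := cos_mem hu
  obtain ⟨hcv, _, hsv⟩ := cos_mem hv
  obtain ⟨hcw, _, hsw⟩ := cos_mem hw
  have hden : 0 < sin v * sin w := mul_pos hsv hsw
  constructor
  · exact div_nonneg (by nlinarith) hden.le
  · rw [div_lt_one hden]
    have hkey : cos u < cos (π - (v + w)) := by
      apply strictAntiOn_cos ⟨by linarith [hv.2, hw.2], by linarith [hv.1, hw.1]⟩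
        ⟨hu.1.le, by linarith [hu.2]⟩ (by linarith)
    rw [cos_pi_sub, cos_add] at hkey
    linarith

lemma faceE {a b c d e f : ℝ} (ha : a ∈ Set.Ioc 0 (π/2)) (hb : b ∈ Set.Ioc 0 (π/2))
    (hc : c ∈ Set.Ioc 0 (π/2)) (hd : d ∈ Set.Ioc 0 (π/2)) (he : e ∈ Set.Ioc 0 (π/2))
    (hf : f ∈ Set.Ioc 0 (π/2))
    (h1 : π < b + c + f) (h2 : π < a + c + e) (h3 : π < a + b + d) :
    ((1-cos a^2)*(1-cos b^2)*(1-cos c^2) - (cos f+cos b*cos c)^2*(1-cos a^2)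
      - (cos e+cos a*cos c)^2*(1-cos b^2) - (cos d+cos a*cos b)^2*(1-cos c^2)
      - 2*((cos f+cos b*cos c)*((cos e+cos a*cos c)*(cos d+cos a*cos b))) < 0)
    ↔ arccos ((cos f + cos b*cos c)/(sin b*sin c))
      + arccos ((cos e + cos a*cos c)/(sin a*sin c))
      + arccos ((cos d + cos a*cos b)/(sin a*sin b)) < π := by
  obtain ⟨_, _, hsa⟩ := cos_mem ha
  obtain ⟨_, _, hsb⟩ := cos_mem hb
  obtain ⟨_, _, hsc⟩ := cos_mem hc
  obtain ⟨hq10, hq11⟩ := qbound hf hb hc (by linarith)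
  obtain ⟨hq20, hq21⟩ := qbound he ha hc (by linarith)
  obtain ⟨hq30, hq31⟩ := qbound hd ha hb (by linarith)
  set q1 := (cos f + cos b*cos c)/(sin b*sin c) with hq1
  set q2 := (cos e + cos a*cos c)/(sin a*sin c) with hq2
  set q3 := (cos d + cos a*cos b)/(sin a*sin b) with hq3
  have hb1 : arccos q1 ∈ Set.Ioc 0 (π/2) :=
    ⟨arccos_pos.mpr hq11, arccos_le_pi_div_two.mpr hq10⟩
  have hb2 : arccos q2 ∈ Set.Ioc 0 (π/2) :=
    ⟨arccos_pos.mpr hq21, arccos_le_pi_div_two.mpr hq20⟩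
  have hb3 : arccos q3 ∈ Set.Ioc 0 (π/2) :=
    ⟨arccos_pos.mpr hq31, arccos_le_pi_div_two.mpr hq30⟩
  have hc1 : cos (arccos q1) = q1 := cos_arccos (by linarith) hq11.le
  have hc2 : cos (arccos q2) = q2 := cos_arccos (by linarith) hq21.le
  have hc3 : cos (arccos q3) = q3 := cos_arccos (by linarith) hq31.le
  have hDE : (1-cos a^2)*(1-cos b^2)*(1-cos c^2) - (cos f+cos b*cos c)^2*(1-cos a^2)
      - (cos e+cos a*cos c)^2*(1-cos b^2) - (cos d+cos a*cos b)^2*(1-cos c^2)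
      - 2*((cos f+cos b*cos c)*((cos e+cos a*cos c)*(cos d+cos a*cos b)))
      = (sin a*(sin b*sin c))^2 * (1 - q1^2 - q2^2 - q3^2 - 2*(q1*(q2*q3))) := by
    have e1 : (1:ℝ) - cos a^2 = sin a^2 := (sin_sq a).symm
    have e2 : (1:ℝ) - cos b^2 = sin b^2 := (sin_sq b).symm
    have e3 : (1:ℝ) - cos c^2 = sin c^2 := (sin_sq c).symm
    rw [hq1, hq2, hq3, e1, e2, e3]
    field_simp
  have hS : (0:ℝ) < (sin a*(sin b*sin c))^2 := by positivity
  have hiff := (sign3 hb1 hb2 hb3).2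
  rw [hc1, hc2, hc3] at hiff
  rw [hDE]
  have h0 : (sin a*(sin b*sin c))^2 * (1 - q1^2 - q2^2 - q3^2 - 2*(q1*(q2*q3))) < 0
      ↔ 1 - q1^2 - q2^2 - q3^2 - 2*(q1*(q2*q3)) < 0 := by
    constructor
    · intro h
      by_contra hE
      push_neg at hE
      nlinarith
    · exact fun h => mul_neg_of_pos_of_neg hS h
  rw [h0]
  exact hiff

lemma gram_det_eq (α : Fin 4 → Fin 4 → ℝ) (hsymm : ∀ i j, α i j = α j i)
    {i j k l : Fin 4} (hij : i ≠ j) (hik : i ≠ k) (hil : i ≠ l)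
    (hjk : j ≠ k) (hjl : j ≠ l) (hkl : k ≠ l) :
    (gramOf α).det = Matrix.det
      !![1, -cos (α i j), -cos (α i k), -cos (α i l);
         -cos (α i j), 1, -cos (α j k), -cos (α j l);
         -cos (α i k), -cos (α j k), 1, -cos (α k l);
         -cos (α i l), -cos (α j l), -cos (α k l), 1] := by
  have hinj : Function.Injective ![i,j,k,l] := by
    intro x y h
    fin_cases x <;> fin_cases y <;> simp_all
  have hbij : Function.Bijective ![i,j,k,l] := Finite.injective_iff_bijective.mp hinj
  let e : Fin 4 ≃ Fin 4 := Equiv.ofBijective _ hbij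
  rw [← Matrix.det_submatrix_equiv_self e]
  congr 1
  ext r s
  have he : ∀ x, e x = ![i,j,k,l] x := fun _ => rfl
  fin_cases r <;> fin_cases s <;>
    simp [gramOf, he, hij, hik, hil, hjk, hjl, hkl,
      Ne.symm hij, Ne.symm hik, Ne.symm hil, Ne.symm hjk, Ne.symm hjl, Ne.symm hkl,
      hsymm j i, hsymm k i, hsymm l i, hsymm k j, hsymm l j, hsymm l k]

lemma gram_minor_det_eq (α : Fin 4 → Fin 4 → ℝ) (hsymm : ∀ i j, α i j = α j i)
    {j k l : Fin 4} (hjk : j ≠ k) (hjl : j ≠ l) (hkl : k ≠ l) :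
    (((gramOf α).submatrix
        (fun i : ({j,k,l} : Finset (Fin 4)) => (i : Fin 4))
        (fun i : ({j,k,l} : Finset (Fin 4)) => (i : Fin 4))).det) = Matrix.det
      !![1, -cos (α j k), -cos (α j l);
         -cos (α j k), 1, -cos (α k l);
         -cos (α j l), -cos (α k l), 1] := by
  set s : Finset (Fin 4) := {j,k,l} with hs
  have hj : j ∈ s := by simp [hs]
  have hk : k ∈ s := by simp [hs]
  have hl : l ∈ s := by simp [hs]
  have hcard : Fintype.card ↥s = 3 := by
    rw [Fintype.card_coe, hs]
    rw [Finset.card_insert_of_notMem (by simp [hjk, hjl]),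
      Finset.card_insert_of_notMem (by simp [hkl])]
    simp
  have hinj : Function.Injective ![(⟨j,hj⟩ : ↥s),⟨k,hk⟩,⟨l,hl⟩] := by
    intro x y h
    fin_cases x <;> fin_cases y <;> simp_all [Subtype.ext_iff]
  have hbij : Function.Bijective ![(⟨j,hj⟩ : ↥s),⟨k,hk⟩,⟨l,hl⟩] := by
    rw [Fintype.bijective_iff_injective_and_card]
    exact ⟨hinj, by simp [hcard]⟩
  let e : Fin 3 ≃ ↥s := Equiv.ofBijective _ hbij
  rw [← Matrix.det_submatrix_equiv_self e, Matrix.submatrix_submatrix]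
  congr 1
  ext r t
  have he0 : ((e 0 : ↥s) : Fin 4) = j := rfl
  have he1 : ((e 1 : ↥s) : Fin 4) = k := rfl
  have he2 : ((e 2 : ↥s) : Fin 4) = l := rfl
  fin_cases r <;> fin_cases t <;>
    simp [gramOf, he0, he1, he2, hjk, hjl, hkl,
      Ne.symm hjk, Ne.symm hjl, Ne.symm hkl, hsymm k j, hsymm l j, hsymm l k]

lemma gram_posdef (α : Fin 4 → Fin 4 → ℝ) (hsymm : ∀ i j, α i j = α j i)
    (hrange : ∀ i j, i ≠ j → α i j ∈ Set.Ioc 0 (π / 2))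
    (h2 : ∀ i j k l : Fin 4, i ≠ j → i ≠ k → i ≠ l → j ≠ k → j ≠ l → k ≠ l →
          π < α j k + α k l + α j l)
    (s : Finset (Fin 4)) (hs : s ≠ Finset.univ) :
    ((gramOf α).submatrix (fun i : s => (i : Fin 4)) (fun i : s => (i : Fin 4))).PosDef := by
  have hherm : (gramOf α).IsHermitian := by
    show Matrix.conjTranspose (gramOf α) = gramOf α
    ext r t
    by_cases h : r = t
    · subst h; simp [gramOf]
    · simp [gramOf, h, Ne.symm h, hsymm t r]
  refine Matrix.PosDef.of_dotProduct_mulVec_pos (hherm.submatrix _) ?_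
  intro x hx
  obtain ⟨i, hi⟩ : ∃ i, i ∉ s := by
    by_contra h
    push_neg at h
    exact hs (Finset.eq_univ_iff_forall.mpr h)
  set y : Fin 4 → ℝ := fun m => if h : m ∈ s then x ⟨m, h⟩ else 0 with hy
  have hyi : y i = 0 := dif_neg hi
  have hyne : ∃ m, y m ≠ 0 := by
    obtain ⟨a, ha⟩ := Function.ne_iff.mp hx
    exact ⟨a, by simpa [hy, a.2] using ha⟩
  have hsx : star x = x := funext fun a => star_trivial _
  have hform : dotProduct (star x)
        (Matrix.mulVec ((gramOf α).submatrix (fun i : s => (i : Fin 4)) (fun i : s => (i : Fin 4))) x)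
      = dotProduct y (Matrix.mulVec (gramOf α) y) := by
    rw [hsx]
    simp only [dotProduct, Matrix.mulVec, Matrix.submatrix_apply]
    have hinner : ∀ m : Fin 4, ∑ n : Fin 4, gramOf α m n * y n
        = ∑ b : {v // v ∈ s}, gramOf α m (b : Fin 4) * x b := by
      intro m
      calc ∑ n : Fin 4, gramOf α m n * y n
          = ∑ n ∈ s, gramOf α m n * y n := by
            refine (Finset.sum_subset (Finset.subset_univ s) ?_).symm
            intro n _ hn
            simp [hy, hn]
        _ = ∑ b : {v // v ∈ s}, gramOf α m (b : Fin 4) * y (b : Fin 4) :=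
            (Finset.sum_coe_sort s (fun n => gramOf α m n * y n)).symm
        _ = ∑ b : {v // v ∈ s}, gramOf α m (b : Fin 4) * x b :=
            Finset.sum_congr rfl fun b _ => by
              rw [show y (b : Fin 4) = x b from dif_pos b.2]
    calc ∑ a : {v // v ∈ s}, x a * ∑ b : {v // v ∈ s}, gramOf α (a : Fin 4) (b : Fin 4) * x b
        = ∑ a : {v // v ∈ s}, y (a : Fin 4) * ∑ n : Fin 4, gramOf α (a : Fin 4) n * y n := by
          refine Finset.sum_congr rfl fun a _ => ?_
          rw [hinner, show y (a : Fin 4) = x a from dif_pos a.2]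
      _ = ∑ m ∈ s, y m * ∑ n : Fin 4, gramOf α m n * y n :=
          Finset.sum_coe_sort s (fun m => y m * ∑ n : Fin 4, gramOf α m n * y n)
      _ = ∑ m : Fin 4, y m * ∑ n : Fin 4, gramOf α m n * y n := by
          refine Finset.sum_subset (Finset.subset_univ s) ?_
          intro m _ hm
          simp [hy, hm]
  rw [hform]
  have hexp : dotProduct y (Matrix.mulVec (gramOf α) y) =
      y 0^2 + y 1^2 + y 2^2 + y 3^2
        - 2*(cos (α 0 1)*(y 0*y 1)) - 2*(cos (α 0 2)*(y 0*y 2)) - 2*(cos (α 0 3)*(y 0*y 3))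
        - 2*(cos (α 1 2)*(y 1*y 2)) - 2*(cos (α 1 3)*(y 1*y 3)) - 2*(cos (α 2 3)*(y 2*y 3)) := by
    have d01 : ((0:Fin 4) = 1) = False := by decide
    have d02 : ((0:Fin 4) = 2) = False := by decide
    have d03 : ((0:Fin 4) = 3) = False := by decide
    have d10 : ((1:Fin 4) = 0) = False := by decide
    have d12 : ((1:Fin 4) = 2) = False := by decide
    have d13 : ((1:Fin 4) = 3) = False := by decide
    have d20 : ((2:Fin 4) = 0) = False := by decide
    have d21 : ((2:Fin 4) = 1) = False := by decide
    have d23 : ((2:Fin 4) = 3) = False := by decide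
    have d30 : ((3:Fin 4) = 0) = False := by decide
    have d31 : ((3:Fin 4) = 1) = False := by decide
    have d32 : ((3:Fin 4) = 2) = False := by decide
    simp only [dotProduct, Matrix.mulVec, Fin.sum_univ_four, gramOf, Matrix.of_apply,
      d01, d02, d03, d10, d12, d13, d20, d21, d23, d30, d31, d32, if_true, if_false,
      eq_self_iff_true, hsymm 1 0, hsymm 2 0, hsymm 3 0, hsymm 2 1, hsymm 3 1, hsymm 3 2]
    ring
  rw [hexp]
  fin_cases i
  · have h1 : y 0 = 0 := hyi
    have hne : ¬ (y 1 = 0 ∧ y 2 = 0 ∧ y 3 = 0) := by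
      rintro ⟨e1, e2, e3⟩
      obtain ⟨m, hm⟩ := hyne
      fin_cases m
      · exact hm h1
      · exact hm e1
      · exact hm e2
      · exact hm e3
    have := quadpos' (hrange 1 2 (by decide)) (hrange 1 3 (by decide)) (hrange 2 3 (by decide))
      (by have := h2 0 1 2 3 (by decide) (by decide) (by decide) (by decide) (by decide) (by decide); linarith)
      (x := y 1) (y := y 2) (z := y 3) hne
    rw [h1]; ring_nf; ring_nf at this; linarith
  · have h1 : y 1 = 0 := hyi
    have hne : ¬ (y 0 = 0 ∧ y 2 = 0 ∧ y 3 = 0) := by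
      rintro ⟨e1, e2, e3⟩
      obtain ⟨m, hm⟩ := hyne
      fin_cases m
      · exact hm e1
      · exact hm h1
      · exact hm e2
      · exact hm e3
    have := quadpos' (hrange 0 2 (by decide)) (hrange 0 3 (by decide)) (hrange 2 3 (by decide))
      (by have := h2 1 0 2 3 (by decide) (by decide) (by decide) (by decide) (by decide) (by decide); linarith)
      (x := y 0) (y := y 2) (z := y 3) hne
    rw [h1]; ring_nf; ring_nf at this; linarith
  · have h1 : y 2 = 0 := hyi
    have hne : ¬ (y 0 = 0 ∧ y 1 = 0 ∧ y 3 = 0) := by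
      rintro ⟨e1, e2, e3⟩
      obtain ⟨m, hm⟩ := hyne
      fin_cases m
      · exact hm e1
      · exact hm e2
      · exact hm h1
      · exact hm e3
    have := quadpos' (hrange 0 1 (by decide)) (hrange 0 3 (by decide)) (hrange 1 3 (by decide))
      (by have := h2 2 0 1 3 (by decide) (by decide) (by decide) (by decide) (by decide) (by decide); linarith)
      (x := y 0) (y := y 1) (z := y 3) hne
    rw [h1]; ring_nf; ring_nf at this; linarith
  · have h1 : y 3 = 0 := hyi
    have hne : ¬ (y 0 = 0 ∧ y 1 = 0 ∧ y 2 = 0) := by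
      rintro ⟨e1, e2, e3⟩
      obtain ⟨m, hm⟩ := hyne
      fin_cases m
      · exact hm e1
      · exact hm e2
      · exact hm e3
      · exact hm h1
    have := quadpos' (hrange 0 1 (by decide)) (hrange 0 2 (by decide)) (hrange 1 2 (by decide))
      (by have := h2 3 0 1 2 (by decide) (by decide) (by decide) (by decide) (by decide) (by decide); linarith)
      (x := y 0) (y := y 1) (z := y 2) hne
    rw [h1]; ring_nf; ring_nf at this; linarith

end Auxiliary

/-- For non-obtuse angles, Milnor's Gram-matrix conditions are equivalent to the
vertex conditions (2) and face-angle conditions (3) of Theorem 3. -/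
theorem gram_conditions_iff_vertex_and_face_conditions (α : Fin 4 → Fin 4 → ℝ)
    (hsymm : ∀ i j, α i j = α j i)
    (hrange : ∀ i j, i ≠ j → α i j ∈ Set.Ioc 0 (π / 2)) :
    ((gramOf α).det < 0 ∧
      ∀ s : Finset (Fin 4), s ≠ Finset.univ →
        ((gramOf α).submatrix (fun i : s => (i : Fin 4)) (fun i : s => (i : Fin 4))).PosDef)
    ↔ ((∀ i j k l : Fin 4, i ≠ j → i ≠ k → i ≠ l → j ≠ k → j ≠ l → k ≠ l →
          π < α j k + α k l + α j l) ∧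
       (∀ i j k l : Fin 4, i ≠ j → i ≠ k → i ≠ l → j ≠ k → j ≠ l → k ≠ l →
          Real.arccos ((Real.cos (α k l) + Real.cos (α i k) * Real.cos (α i l)) /
              (Real.sin (α i k) * Real.sin (α i l))) +
          Real.arccos ((Real.cos (α j l) + Real.cos (α i j) * Real.cos (α i l)) /
              (Real.sin (α i j) * Real.sin (α i l))) +
          Real.arccos ((Real.cos (α j k) + Real.cos (α i j) * Real.cos (α i k)) /
              (Real.sin (α i j) * Real.sin (α i k))) < π)) := by
  constructor
  · rintro ⟨hdet, hpd⟩
    have hcond2 : ∀ i j k l : Fin 4, i ≠ j → i ≠ k → i ≠ l → j ≠ k → j ≠ l → k ≠ l →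
        π < α j k + α k l + α j l := by
      intro i j k l hij hik hil hjk hjl hkl
      have hsne : ({j,k,l} : Finset (Fin 4)) ≠ Finset.univ := by
        intro h
        have hmem : i ∈ ({j,k,l} : Finset (Fin 4)) := h ▸ Finset.mem_univ i
        simp only [Finset.mem_insert, Finset.mem_singleton] at hmem
        rcases hmem with h' | h' | h'
        · exact hij h'
        · exact hik h'
        · exact hil h'
      have hp := (hpd _ hsne).det_pos
      rw [gram_minor_det_eq α hsymm hjk hjl hkl, det3_val] at hp
      have := (sign3 (hrange j k hjk) (hrange j l hjl) (hrange k l hkl)).1.mp hp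
      linarith
    refine ⟨hcond2, ?_⟩
    intro i j k l hij hik hil hjk hjl hkl
    have hd := hdet
    rw [gram_det_eq α hsymm hij hik hil hjk hjl hkl, det4_val] at hd
    have hv1 : π < α i k + α i l + α k l := by
      have := hcond2 j i k l (Ne.symm hij) hjk hjl hik hil hkl
      linarith
    have hv2 : π < α i j + α i l + α j l := by
      have := hcond2 k i j l (Ne.symm hik) (Ne.symm hjk) hkl hij hil hjl
      linarith
    have hv3 : π < α i j + α i k + α j k := by
      have := hcond2 l i j k (Ne.symm hil) (Ne.symm hjl) (Ne.symm hkl) hij hik hjk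
      linarith
    exact (faceE (hrange i j hij) (hrange i k hik) (hrange i l hil)
      (hrange j k hjk) (hrange j l hjl) (hrange k l hkl) hv1 hv2 hv3).mp hd
  · rintro ⟨h2, h3⟩
    refine ⟨?_, fun s hs => gram_posdef α hsymm hrange h2 s hs⟩
    rw [gram_det_eq α hsymm (show (0:Fin 4) ≠ 1 by decide) (show (0:Fin 4) ≠ 2 by decide)
      (show (0:Fin 4) ≠ 3 by decide) (show (1:Fin 4) ≠ 2 by decide)
      (show (1:Fin 4) ≠ 3 by decide) (show (2:Fin 4) ≠ 3 by decide), det4_val]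
    have hv1 : π < α 0 2 + α 0 3 + α 2 3 := by
      have := h2 1 0 2 3 (by decide) (by decide) (by decide) (by decide) (by decide) (by decide)
      linarith
    have hv2 : π < α 0 1 + α 0 3 + α 1 3 := by
      have := h2 2 0 1 3 (by decide) (by decide) (by decide) (by decide) (by decide) (by decide)
      linarith
    have hv3 : π < α 0 1 + α 0 2 + α 1 2 := by
      have := h2 3 0 1 2 (by decide) (by decide) (by decide) (by decide) (by decide) (by decide)
      linarith
    exact (faceE (hrange 0 1 (by decide)) (hrange 0 2 (by decide)) (hrange 0 3 (by decide))
      (hrange 1 2 (by decide)) (hrange 1 3 (by decide)) (hrange 2 3 (by decide))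
      hv1 hv2 hv3).mpr
        (h3 0 1 2 3 (by decide) (by decide) (by decide) (by decide) (by decide) (by decide))
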